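/- Let (a, f) be a module over the Drinfeld quiver Q_z such that a has a right dual a^∗ in A. If f^{∗n} = 0 for some n ∈ ℕ, then (f†)^{∗n} = 0; hence the right dual module of a locally nilpotent Q_z-module is locally nilpotent. -/

import Mathlib

/-!
Statement 4: If `(a, f)` is a module over the Drinfeld quiver `Q_z`, where `a` has a right dual
`a^∗`, and `f^{∗n} = 0`, then `(f†)^{∗n} = 0`: the right dual of a locally nilpotent module is
locally nilpotent.
-/

open CategoryTheory MonoidalCategory

universe v u

variable {k : Type*} [Field k]
variable {A : Type u} [Category.{v} A] [MonoidalCategory A]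
  [Preadditive A] [CategoryTheory.Linear k A] [MonoidalPreadditive A] [MonoidalLinear k A]

/-- The `n`-th tensor power `z^{⊗n}` of an object `z` of the Drinfeld center of `A`. -/
noncomputable def zcpow (z : CategoryTheory.Center A) : ℕ → CategoryTheory.Center A
  | 0 => 𝟙_ (CategoryTheory.Center A)
  | n + 1 => z ⊗ zcpow z n

/-- The iterated action `f^{∗n} : z^{⊗n} ⊗ a ⟶ a` of a module `(a, f)` over the Drinfeld
quiver `Q_z` (suppressing associators). -/
noncomputable def fstar (z : CategoryTheory.Center A) {a : A} (f : z.1 ⊗ a ⟶ a) :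
    (n : ℕ) → ((zcpow z n).1 ⊗ a ⟶ a)
  | 0 => (λ_ a).hom
  | n + 1 => (α_ z.1 (zcpow z n).1 a).hom ≫ (z.1 ◁ fstar z f n) ≫ f

/-- The action `f† : z ⊗ a^∗ ⟶ a^∗` of the right dual module `(a^∗, f†)` of a module `(a, f)`
over the Drinfeld quiver `Q_z`. -/
noncomputable def fdag (z : CategoryTheory.Center A) {a aS : A} (f : z.1 ⊗ a ⟶ a)
    (ev : aS ⊗ a ⟶ 𝟙_ A) (coev : 𝟙_ A ⟶ a ⊗ aS) : z.1 ⊗ aS ⟶ aS :=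
  - ((z.2.β aS).hom ≫ (ρ_ (aS ⊗ z.1)).inv ≫ ((aS ⊗ z.1) ◁ coev)
      ≫ (α_ aS z.1 (a ⊗ aS)).hom ≫ (aS ◁ (α_ z.1 a aS).inv) ≫ (aS ◁ (f ▷ aS))
      ≫ (α_ aS a aS).inv ≫ (ev ▷ aS) ≫ (λ_ aS).hom)

/-- The mate `aS ⊗ w ⟶ aS` of an action `g : w ⊗ a ⟶ a` under the duality `(ev, coev)`. -/
noncomputable def mateM {a aS : A} (ev : aS ⊗ a ⟶ 𝟙_ A) (coev : 𝟙_ A ⟶ a ⊗ aS)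
    {w : A} (g : w ⊗ a ⟶ a) : aS ⊗ w ⟶ aS :=
  (ρ_ (aS ⊗ w)).inv ≫ ((aS ⊗ w) ◁ coev) ≫ (α_ aS w (a ⊗ aS)).hom ≫ (aS ◁ (α_ w a aS).inv)
    ≫ (aS ◁ (g ▷ aS)) ≫ (α_ aS a aS).inv ≫ (ev ▷ aS) ≫ (λ_ aS).hom

lemma fdag_eq (z : CategoryTheory.Center A) {a aS : A} (f : z.1 ⊗ a ⟶ a)
    (ev : aS ⊗ a ⟶ 𝟙_ A) (coev : 𝟙_ A ⟶ a ⊗ aS) :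
    fdag z f ev coev = -((z.2.β aS).hom ≫ mateM ev coev f) := by
  simp [fdag, mateM]

lemma mateM_zero {a aS : A} (ev : aS ⊗ a ⟶ 𝟙_ A) (coev : 𝟙_ A ⟶ a ⊗ aS) (w : A) :
    mateM ev coev (0 : w ⊗ a ⟶ a) = 0 := by
  simp [mateM]

lemma mateM_nat {a aS : A} (ev : aS ⊗ a ⟶ 𝟙_ A) (coev : 𝟙_ A ⟶ a ⊗ aS)
    {v w : A} (σ : v ⟶ w) (g : w ⊗ a ⟶ a) :
    (aS ◁ σ) ≫ mateM ev coev g = mateM ev coev ((σ ▷ a) ≫ g) := by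
  calc (aS ◁ σ) ≫ mateM ev coev g
      = 𝟙 _ ⊗≫ ((aS ◁ σ) ▷ (𝟙_ A) ≫ ((aS ⊗ w : A) ◁ coev)) ⊗≫ aS ◁ (g ▷ aS)
          ⊗≫ (ev ▷ aS) ⊗≫ 𝟙 _ := by
        rw [mateM]; monoidal
    _ = 𝟙 _ ⊗≫ (((aS ⊗ v : A) ◁ coev) ≫ (aS ◁ σ) ▷ (a ⊗ aS)) ⊗≫ aS ◁ (g ▷ aS)
          ⊗≫ (ev ▷ aS) ⊗≫ 𝟙 _ := by
        rw [← whisker_exchange]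
    _ = mateM ev coev ((σ ▷ a) ≫ g) := by rw [mateM]; monoidal

lemma mateM_lam {a aS : A} (ev : aS ⊗ a ⟶ 𝟙_ A) (coev : 𝟙_ A ⟶ a ⊗ aS)
    (zag : (aS ◁ coev) ≫ (α_ aS a aS).inv ≫ (ev ▷ aS) = (ρ_ aS).hom ≫ (λ_ aS).inv) :
    mateM ev coev ((λ_ a).hom) = (ρ_ aS).hom := by
  calc mateM ev coev ((λ_ a).hom)
      = 𝟙 _ ⊗≫ ((aS ◁ coev) ≫ (α_ aS a aS).inv ≫ (ev ▷ aS)) ⊗≫ 𝟙 _ := by rw [mateM]; monoidal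
    _ = 𝟙 _ ⊗≫ ((ρ_ aS).hom ≫ (λ_ aS).inv) ⊗≫ 𝟙 _ := by rw [zag]
    _ = (ρ_ aS).hom := by monoidal

lemma mateM_comp {a aS : A} (ev : aS ⊗ a ⟶ 𝟙_ A) (coev : 𝟙_ A ⟶ a ⊗ aS)
    (zig : (coev ▷ a) ≫ (α_ a aS a).hom ≫ (a ◁ ev) = (λ_ a).hom ≫ (ρ_ a).inv)
    {w zc : A} (g : w ⊗ a ⟶ a) (f : zc ⊗ a ⟶ a) :
    (mateM ev coev g ▷ zc) ≫ mateM ev coev f =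
      (α_ aS w zc).hom ≫ mateM ev coev ((α_ w zc a).hom ≫ (w ◁ f) ≫ g) := by
  set u : aS ⊗ (w ⊗ a) ⟶ 𝟙_ A := (aS ◁ g) ≫ ev with hu
  set v : zc ⟶ a ⊗ aS := (ρ_ zc).inv ≫ (zc ◁ coev) ≫ (α_ zc a aS).inv ≫ (f ▷ aS) with hv
  calc (mateM ev coev g ▷ zc) ≫ mateM ev coev f
      = 𝟙 _ ⊗≫ (((aS ⊗ w : A) ◁ coev) ▷ zc)
          ⊗≫ (u ▷ (aS ⊗ zc : A) ≫ (𝟙_ A) ◁ (aS ◁ v))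
          ⊗≫ ((α_ aS a aS).inv ≫ (ev ▷ aS)) ⊗≫ 𝟙 _ := by
        rw [mateM, mateM, hu, hv]; monoidal
    _ = 𝟙 _ ⊗≫ (((aS ⊗ w : A) ◁ coev) ▷ zc)
          ⊗≫ ((aS ⊗ (w ⊗ a) : A) ◁ (aS ◁ v) ≫ u ▷ (aS ⊗ (a ⊗ aS) : A))
          ⊗≫ ((α_ aS a aS).inv ≫ (ev ▷ aS)) ⊗≫ 𝟙 _ := by
        rw [← whisker_exchange u (aS ◁ v)]
    _ = 𝟙 _ ⊗≫ ((((aS ⊗ w : A) ◁ coev) ▷ zc) ≫ (((aS ⊗ w) ⊗ (a ⊗ aS) : A) ◁ v))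
          ⊗≫ (u ▷ (aS ⊗ (a ⊗ aS) : A))
          ⊗≫ ((α_ aS a aS).inv ≫ (ev ▷ aS)) ⊗≫ 𝟙 _ := by monoidal
    _ = 𝟙 _ ⊗≫ ((((aS ⊗ w) ⊗ 𝟙_ A : A) ◁ v) ≫ (((aS ⊗ w : A) ◁ coev) ▷ (a ⊗ aS)))
          ⊗≫ (u ▷ (aS ⊗ (a ⊗ aS) : A))
          ⊗≫ ((α_ aS a aS).inv ≫ (ev ▷ aS)) ⊗≫ 𝟙 _ := by
        rw [← whisker_exchange ((aS ⊗ w : A) ◁ coev) v]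
    _ = 𝟙 _ ⊗≫ (((aS ⊗ w) ⊗ 𝟙_ A : A) ◁ v) ⊗≫ (((aS ⊗ w : A) ◁ coev) ▷ (a ⊗ aS))
          ⊗≫ (u ▷ ((aS ⊗ a) ⊗ aS : A) ≫ (𝟙_ A) ◁ (ev ▷ aS)) ⊗≫ 𝟙 _ := by monoidal
    _ = 𝟙 _ ⊗≫ (((aS ⊗ w) ⊗ 𝟙_ A : A) ◁ v) ⊗≫ (((aS ⊗ w : A) ◁ coev) ▷ (a ⊗ aS))
          ⊗≫ ((aS ⊗ (w ⊗ a) : A) ◁ (ev ▷ aS) ≫ u ▷ (𝟙_ A ⊗ aS : A)) ⊗≫ 𝟙 _ := by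
        rw [← whisker_exchange u (ev ▷ aS)]
    _ = 𝟙 _ ⊗≫ (((aS ⊗ w) ⊗ 𝟙_ A : A) ◁ v)
          ⊗≫ (((aS ⊗ w : A) ◁ ((coev ▷ a) ≫ (α_ a aS a).hom ≫ (a ◁ ev))) ▷ aS)
          ⊗≫ (u ▷ aS) ⊗≫ 𝟙 _ := by monoidal
    _ = 𝟙 _ ⊗≫ (((aS ⊗ w) ⊗ 𝟙_ A : A) ◁ v)
          ⊗≫ (((aS ⊗ w : A) ◁ ((λ_ a).hom ≫ (ρ_ a).inv)) ▷ aS)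
          ⊗≫ (u ▷ aS) ⊗≫ 𝟙 _ := by rw [zig]
    _ = (α_ aS w zc).hom ≫ mateM ev coev ((α_ w zc a).hom ≫ (w ◁ f) ≫ g) := by
        rw [mateM, hu, hv]; monoidal

/-- Insert a tensor factor of `z` at the end of `z^{⊗n}`. -/
noncomputable def einsert (z : CategoryTheory.Center A) :
    (n : ℕ) → ((zcpow z n).1 ⊗ z.1 ⟶ (zcpow z (n+1)).1)
  | 0 => (λ_ z.1).hom ≫ (ρ_ z.1).inv
  | n + 1 => (α_ z.1 (zcpow z n).1 z.1).hom ≫ (z.1 ◁ einsert z n)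

/-- Reversal of the tensor factors of `z^{⊗n}`. -/
noncomputable def rev (z : CategoryTheory.Center A) : (n : ℕ) → ((zcpow z n).1 ⟶ (zcpow z n).1)
  | 0 => 𝟙 _
  | n + 1 => (z.2.β (zcpow z n).1).hom ≫ (rev z n ▷ z.1) ≫ einsert z n

/-- The reversed iterate of an action `f`. -/
noncomputable def krev (z : CategoryTheory.Center A) {a : A} (f : z.1 ⊗ a ⟶ a) :
    (n : ℕ) → ((zcpow z n).1 ⊗ a ⟶ a)
  | 0 => (λ_ a).hom
  | n + 1 => ((z.2.β (zcpow z n).1).hom ▷ a) ≫ (α_ (zcpow z n).1 z.1 a).hom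
      ≫ ((zcpow z n).1 ◁ f) ≫ krev z f n

lemma fstar_insert (z : CategoryTheory.Center A) {a : A} (f : z.1 ⊗ a ⟶ a) (n : ℕ) :
    (α_ (zcpow z n).1 z.1 a).hom ≫ ((zcpow z n).1 ◁ f) ≫ fstar z f n =
      (einsert z n ▷ a) ≫ fstar z f (n+1) := by
  induction n with
  | zero =>
      show (α_ (𝟙_ A) z.1 a).hom ≫ ((𝟙_ A) ◁ f) ≫ (λ_ a).hom =
        (((λ_ z.1).hom ≫ (ρ_ z.1).inv) ▷ a) ≫ (α_ z.1 (𝟙_ A) a).hom ≫ (z.1 ◁ (λ_ a).hom) ≫ f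
      calc (α_ (𝟙_ A) z.1 a).hom ≫ ((𝟙_ A) ◁ f) ≫ (λ_ a).hom
          = 𝟙 _ ⊗≫ f := by monoidal
        _ = (((λ_ z.1).hom ≫ (ρ_ z.1).inv) ▷ a) ≫ (α_ z.1 (𝟙_ A) a).hom
              ≫ (z.1 ◁ (λ_ a).hom) ≫ f := by monoidal
  | succ n ih =>
      show (α_ (z.1 ⊗ (zcpow z n).1) z.1 a).hom ≫ ((z.1 ⊗ (zcpow z n).1) ◁ f) ≫ fstar z f (n+1) =
        (((α_ z.1 (zcpow z n).1 z.1).hom ≫ (z.1 ◁ einsert z n)) ▷ a) ≫ fstar z f (n+2)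
      calc (α_ (z.1 ⊗ (zcpow z n).1) z.1 a).hom ≫ ((z.1 ⊗ (zcpow z n).1) ◁ f) ≫ fstar z f (n+1)
          = 𝟙 _ ⊗≫ (z.1 ◁ ((α_ (zcpow z n).1 z.1 a).hom ≫ ((zcpow z n).1 ◁ f)
              ≫ fstar z f n)) ⊗≫ f := by
            rw [show fstar z f (n+1)
              = (α_ z.1 (zcpow z n).1 a).hom ≫ (z.1 ◁ fstar z f n) ≫ f from rfl]
            monoidal
        _ = 𝟙 _ ⊗≫ (z.1 ◁ ((einsert z n ▷ a) ≫ fstar z f (n+1))) ⊗≫ f := by rw [ih]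
        _ = (((α_ z.1 (zcpow z n).1 z.1).hom ≫ (z.1 ◁ einsert z n)) ▷ a) ≫ fstar z f (n+2) := by
            rw [show fstar z f (n+2)
              = (α_ z.1 (zcpow z (n+1)).1 a).hom ≫ (z.1 ◁ fstar z f (n+1)) ≫ f from rfl]
            monoidal

lemma krev_eq (z : CategoryTheory.Center A) {a : A} (f : z.1 ⊗ a ⟶ a) (n : ℕ) :
    krev z f n = (rev z n ▷ a) ≫ fstar z f n := by
  induction n with
  | zero => simp [krev, rev, fstar]; exact (Category.id_comp _).symm
  | succ n ih =>
      show ((z.2.β (zcpow z n).1).hom ▷ a) ≫ (α_ (zcpow z n).1 z.1 a).hom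
          ≫ ((zcpow z n).1 ◁ f) ≫ krev z f n =
        (((z.2.β (zcpow z n).1).hom ≫ (rev z n ▷ z.1) ≫ einsert z n) ▷ a) ≫ fstar z f (n+1)
      rw [ih]
      calc ((z.2.β (zcpow z n).1).hom ▷ a) ≫ (α_ (zcpow z n).1 z.1 a).hom
            ≫ ((zcpow z n).1 ◁ f) ≫ ((rev z n ▷ a) ≫ fstar z f n)
          = ((z.2.β (zcpow z n).1).hom ▷ a) ≫ (α_ (zcpow z n).1 z.1 a).hom
              ≫ (((zcpow z n).1 ◁ f) ≫ (rev z n ▷ a)) ≫ fstar z f n := by simp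
        _ = ((z.2.β (zcpow z n).1).hom ▷ a) ≫ (α_ (zcpow z n).1 z.1 a).hom
              ≫ ((rev z n ▷ (z.1 ⊗ a)) ≫ ((zcpow z n).1 ◁ f)) ≫ fstar z f n := by
            rw [← whisker_exchange]
        _ = ((z.2.β (zcpow z n).1).hom ▷ a) ≫ ((rev z n ▷ z.1) ▷ a)
              ≫ (α_ (zcpow z n).1 z.1 a).hom ≫ ((zcpow z n).1 ◁ f) ≫ fstar z f n := by
            simp only [Category.assoc, associator_naturality_left_assoc]
        _ = (((z.2.β (zcpow z n).1).hom ≫ (rev z n ▷ z.1) ≫ einsert z n) ▷ a)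
              ≫ fstar z f (n+1) := by
            rw [fstar_insert]; simp

lemma whiskerLeft_zsmul' (X : A) {Y Z : A} (m : ℤ) (g : Y ⟶ Z) : X ◁ (m • g) = m • (X ◁ g) := by
  simpa using Functor.map_zsmul (F := tensorLeft X) (r := m) (f := g)

lemma fstar_fdag (z : CategoryTheory.Center A) {a aS : A} (f : z.1 ⊗ a ⟶ a)
    (ev : aS ⊗ a ⟶ 𝟙_ A) (coev : 𝟙_ A ⟶ a ⊗ aS)
    (zig : (coev ▷ a) ≫ (α_ a aS a).hom ≫ (a ◁ ev) = (λ_ a).hom ≫ (ρ_ a).inv)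
    (zag : (aS ◁ coev) ≫ (α_ aS a aS).inv ≫ (ev ▷ aS) = (ρ_ aS).hom ≫ (λ_ aS).inv)
    (n : ℕ) :
    fstar z (fdag z f ev coev) n =
      ((-1 : ℤ) ^ n) • (((zcpow z n).2.β aS).hom ≫ mateM ev coev (krev z f n)) := by
  induction n with
  | zero =>
      show (λ_ aS).hom = ((-1 : ℤ) ^ 0)
        • (((𝟙_ (CategoryTheory.Center A)).2.β aS).hom ≫ mateM ev coev ((λ_ a).hom))
      erw [mateM_lam ev coev zag]
      simp
      exact (by simp : (λ_ aS).hom = ((λ_ aS).hom ≫ (ρ_ aS).inv) ≫ (ρ_ aS).hom)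
  | succ n ih =>
      have key : (α_ z.1 (zcpow z n).1 aS).hom
          ≫ (z.1 ◁ (((zcpow z n).2.β aS).hom ≫ mateM ev coev (krev z f n)))
          ≫ (z.2.β aS).hom ≫ mateM ev coev f =
          ((zcpow z (n+1)).2.β aS).hom ≫ mateM ev coev (krev z f (n+1)) := by
        rw [HalfBraiding.naturality_assoc]
        simp only [comp_whiskerRight, Category.assoc]
        rw [← HalfBraiding.naturality_assoc]
        rw [HalfBraiding.monoidal]
        rw [mateM_comp ev coev zig]
        rw [show krev z f (n+1) = ((z.2.β (zcpow z n).1).hom ▷ a)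
          ≫ ((α_ (zcpow z n).1 z.1 a).hom ≫ ((zcpow z n).1 ◁ f) ≫ krev z f n) from rfl]
        erw [← mateM_nat ev coev]
        simp [zcpow]
      show (α_ z.1 (zcpow z n).1 aS).hom ≫ (z.1 ◁ fstar z (fdag z f ev coev) n)
          ≫ fdag z f ev coev = _
      rw [ih, fdag_eq]
      simp only [whiskerLeft_zsmul', Preadditive.comp_zsmul, Preadditive.zsmul_comp,
        Preadditive.comp_neg, Preadditive.neg_comp, smul_neg, Category.assoc]
      rw [← key]
      rw [pow_succ]
      simp [mul_comm, neg_smul, smul_smul, Category.assoc]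
      exact (neg_smul _ _).symm

/-- If `f^{∗n} = 0` then `(f†)^{∗n} = 0`: the right dual module of a locally nilpotent module
over a Drinfeld quiver is locally nilpotent. -/
theorem fdag_locally_nilpotent (z : CategoryTheory.Center A) {a aS : A}
    (f : z.1 ⊗ a ⟶ a)
    (ev : aS ⊗ a ⟶ 𝟙_ A) (coev : 𝟙_ A ⟶ a ⊗ aS)
    (zig : (coev ▷ a) ≫ (α_ a aS a).hom ≫ (a ◁ ev) = (λ_ a).hom ≫ (ρ_ a).inv)
    (zag : (aS ◁ coev) ≫ (α_ aS a aS).inv ≫ (ev ▷ aS) = (ρ_ aS).hom ≫ (λ_ aS).inv)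
    (n : ℕ) (hf : fstar z f n = 0) :
    fstar z (fdag z f ev coev) n = 0 := by
  rw [fstar_fdag z f ev coev zig zag n, krev_eq, hf, Limits.comp_zero, mateM_zero,
    Limits.comp_zero, smul_zero]
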